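/- arXiv:1609.08522 — 6 statements merged into one kernel-verified Lean document; each statement's English description precedes it below -/
import Mathlib

section
/- Let X ∈ ℂ^n, and suppose the pair (u, s) with u ∈ ℂ^n, s ∈ ℝ attains the infimum in the SDP characterization of ‖X‖_A², i.e., the block matrix [[Toep(u), X],[Xᴴ, s]] is positive semidefinite and (1/n)·s·Tr(Toep(u)) = ‖X‖_A². Suppose Toep(u) admits the Vandermonde decomposition Toep(u) = V D Vᴴ, where V = [a(t_1,0), ..., a(t_r,0)] for distinct t_1,...,t_r ∈ [0,1) and D is a diagonal matrix with positive diagonal entries. Then there exists a vector c ∈ ℂ^r such that X = Vc and Σ_{j=1}^r |c_j| = ‖X‖_A. -/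
open Matrix Complex ComplexConjugate BigOperators
open scoped ComplexOrder

/-- The atom `a(t,φ) ∈ ℂ^n` with `f`-th entry `e^{−i(2πft−φ)}`. -/
noncomputable def atom (n : ℕ) (t φ : ℝ) : Fin n → ℂ :=
  fun f => Complex.exp (-Complex.I * ((2 * Real.pi * (f : ℕ) * t : ℝ) - (φ : ℝ)))

/-- The atomic norm of `X ∈ ℂ^n`. -/
noncomputable def atomicNorm {n : ℕ} (X : Fin n → ℂ) : ℝ :=
  sInf { v : ℝ | ∃ (k : ℕ) (c : Fin k → ℂ) (t φ : Fin k → ℝ),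
    (∀ j, t j ∈ Set.Ico (0 : ℝ) 1) ∧ (∀ j, φ j ∈ Set.Ico (0 : ℝ) (2 * Real.pi)) ∧
    X = ∑ j, ((‖c j‖ : ℝ) : ℂ) • atom n (t j) (φ j) ∧
    v = ∑ j, ‖c j‖ }

/-- The Hermitian Toeplitz matrix whose first column is `u`. -/
def toep (n : ℕ) (u : Fin n → ℂ) : Matrix (Fin n) (Fin n) ℂ :=
  Matrix.of fun j k =>
    if (k : ℕ) ≤ (j : ℕ) then
      u ⟨(j : ℕ) - (k : ℕ), lt_of_le_of_lt (Nat.sub_le _ _) j.isLt⟩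
    else
      star (u ⟨(k : ℕ) - (j : ℕ), lt_of_le_of_lt (Nat.sub_le _ _) k.isLt⟩)

/-- The `(n+1)×(n+1)` block matrix `[[T, X],[Xᴴ, s]]`. -/
noncomputable def blockMat {n : ℕ} (T : Matrix (Fin n) (Fin n) ℂ) (X : Fin n → ℂ) (s : ℝ) :
    Matrix (Fin n ⊕ Unit) (Fin n ⊕ Unit) ℂ :=
  Matrix.fromBlocks T (Matrix.replicateCol Unit X) (Matrix.replicateRow Unit (star X))
    (Matrix.of fun _ _ => (s : ℂ))

/-! ### Auxiliary lemmas -/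

lemma atom_normSq (n : ℕ) (t : ℝ) (f : Fin n) : Complex.normSq (atom n t 0 f) = 1 := by
  have h : ‖atom n t 0 f‖ = 1 := by
    unfold atom; rw [Complex.norm_exp]
    have : (-Complex.I * (((2 * Real.pi * (f : ℕ) * t : ℝ) : ℂ) - ((0:ℝ) : ℂ))).re = 0 := by
      simp [Complex.mul_re]
    rw [this, Real.exp_zero]
  rw [← Complex.sq_norm, h, one_pow]

lemma quad_expand {n : ℕ} (T : Matrix (Fin n) (Fin n) ℂ) (X : Fin n → ℂ) (s : ℝ)
    (hpsd : (blockMat T X s).PosSemidef) (v : Fin n → ℂ) (w : ℂ) :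
    0 ≤ (star v ⬝ᵥ T.mulVec v).re + 2 * ((star v ⬝ᵥ X) * w).re + s * Complex.normSq w := by
  have h := hpsd.re_dotProduct_nonneg (Sum.elim v (fun _ => w))
  have hexp : star (Sum.elim v (fun _ : Unit => w)) ⬝ᵥ
        (blockMat T X s).mulVec (Sum.elim v (fun _ => w))
      = star v ⬝ᵥ T.mulVec v + (star v ⬝ᵥ X) * w
        + (starRingEnd ℂ) ((star v ⬝ᵥ X) * w) + (s : ℂ) * (Complex.normSq w : ℝ) := by
    simp only [blockMat, Matrix.mulVec, dotProduct, Fintype.sum_sum_type,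
      Matrix.fromBlocks, Matrix.of_apply, Sum.elim_inl, Sum.elim_inr, Pi.star_apply,
      Matrix.replicateCol_apply, Matrix.replicateRow_apply]
    simp only [Finset.univ_unique, Finset.sum_singleton, Finset.sum_add_distrib, Finset.mul_sum,
      Finset.sum_mul, map_sum, _root_.map_mul]
    push_cast [Complex.normSq_eq_conj_mul_self]
    ring_nf
    simp only [Complex.star_def, Complex.conj_conj, Finset.mul_sum, Finset.sum_add_distrib]
    ring_nf
    congr 1
    exact Finset.sum_congr rfl fun x _ => by ring
  rw [hexp] at h
  simp only [RCLike.re_to_complex, Complex.add_re, Complex.conj_re, ← Complex.ofReal_mul,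
    Complex.ofReal_re] at h
  linarith

lemma quadform_eq {n r : ℕ} (V : Matrix (Fin n) (Fin r) ℂ) (d : Fin r → ℝ) (v : Fin n → ℂ) :
    star v ⬝ᵥ (V * Matrix.diagonal (fun j => (d j : ℂ)) * Vᴴ).mulVec v
      = ((∑ j, d j * Complex.normSq ((Vᴴ.mulVec v) j) : ℝ) : ℂ) := by
  rw [← Matrix.mulVec_mulVec, ← Matrix.mulVec_mulVec, Matrix.dotProduct_mulVec]
  have hsv : star v ᵥ* V = star (Vᴴ.mulVec v) := by
    rw [Matrix.star_mulVec, Matrix.conjTranspose_conjTranspose]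
  rw [hsv]
  push_cast
  simp only [dotProduct, Pi.star_apply, Matrix.mulVec_diagonal]
  exact Finset.sum_congr rfl fun j _ => by
    rw [Complex.star_def, Complex.normSq_eq_conj_mul_self]; ring

/-- Proposition 1, second part: if `(u,s)` attains the infimum in the SDP characterization of
`‖X‖_A²` and `Toep(u)` has a Vandermonde decomposition `V D Vᴴ`, then `X = Vc` with
`Σ|c_j| = ‖X‖_A`. -/
theorem atomicNorm_attained_of_vandermonde (n r : ℕ) (X u : Fin n → ℂ) (s : ℝ)
    (hpsd : (blockMat (toep n u) X s).PosSemidef)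
    (hopt : (1 / (n : ℝ)) * s * ((toep n u).trace).re = (atomicNorm X) ^ 2)
    (t : Fin r → ℝ) (ht : ∀ j, t j ∈ Set.Ico (0 : ℝ) 1) (htinj : Function.Injective t)
    (d : Fin r → ℝ) (hd : ∀ j, 0 < d j)
    (V : Matrix (Fin n) (Fin r) ℂ) (hV : ∀ f l, V f l = atom n (t l) 0 f)
    (hdecomp : toep n u = V * Matrix.diagonal (fun j => (d j : ℂ)) * Vᴴ) :
    ∃ c : Fin r → ℂ, X = V.mulVec c ∧ ∑ j, ‖c j‖ = atomicNorm X := by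
  -- nonnegativity of the atomic norm
  have hA0 : 0 ≤ atomicNorm X := by
    unfold atomicNorm
    apply Real.sInf_nonneg
    rintro v ⟨k, c, t', φ', -, -, -, rfl⟩
    exact Finset.sum_nonneg fun j _ => norm_nonneg _
  have hs0 : 0 ≤ s := by
    have := quad_expand _ X s hpsd 0 1
    simpa using this
  -- the lower bound: any representation gives at least the atomic norm
  have lower : ∀ c : Fin r → ℂ, X = V.mulVec c → atomicNorm X ≤ ∑ j, ‖c j‖ := by
    intro c hc
    unfold atomicNorm
    apply csInf_le
    · refine ⟨0, ?_⟩
      rintro v ⟨k, c', t', φ', -, -, -, rfl⟩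
      exact Finset.sum_nonneg fun j _ => norm_nonneg _
    · refine ⟨r, c, t, fun j => if 0 ≤ (c j).arg then (c j).arg else (c j).arg + 2 * Real.pi,
        ht, ?_, ?_, rfl⟩
      · intro j
        dsimp only
        constructor
        · split_ifs with h
          · exact h
          · nlinarith [Complex.neg_pi_lt_arg (c j), Real.pi_pos]
        · split_ifs with h
          · nlinarith [Complex.arg_le_pi (c j), Real.pi_pos]
          · push_neg at h; linarith
      · funext f
        rw [hc]
        simp only [Matrix.mulVec, dotProduct, Finset.sum_apply, Pi.smul_apply,
          Complex.real_smul]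
        refine Finset.sum_congr rfl fun j _ => ?_
        have hatom : ∀ φ : ℝ, atom n (t j) φ f
            = Complex.exp (φ * Complex.I) * atom n (t j) 0 f := by
          intro φ
          simp only [atom]
          rw [← Complex.exp_add]
          congr 1
          push_cast
          ring
        have hphase : ((‖c j‖ : ℝ) : ℂ) *
            Complex.exp ((if 0 ≤ (c j).arg then (c j).arg else (c j).arg + 2 * Real.pi : ℝ)
              * Complex.I) = c j := by
          split_ifs with h
          · exact Complex.norm_mul_exp_arg_mul_I (c j)
          · have h2 : Complex.exp ((((c j).arg + 2 * Real.pi : ℝ) : ℂ) * Complex.I)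
                = Complex.exp (((c j).arg : ℂ) * Complex.I) := by
              push_cast
              rw [add_mul, Complex.exp_add]
              have h3 : Complex.exp (2 * (Real.pi : ℂ) * Complex.I) = 1 := by
                simpa using Complex.exp_two_pi_mul_I
              rw [h3, mul_one]
            rw [h2, Complex.norm_mul_exp_arg_mul_I]
        rw [hatom, smul_eq_mul, ← mul_assoc, hphase, hV, mul_comm]
  -- trivial case n = 0
  rcases Nat.eq_zero_or_pos n with hn | hn
  · subst hn
    refine ⟨0, funext fun i => i.elim0, ?_⟩
    have h2 : atomicNorm X ^ 2 = 0 := by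
      rw [← hopt]; simp
    have : atomicNorm X = 0 := by
      have := pow_eq_zero_iff (two_ne_zero) |>.mp h2
      exact this
    simp [this]
  -- main case
  have hqf : ∀ v : Fin n → ℂ, star v ⬝ᵥ (toep n u).mulVec v
      = ((∑ j, d j * Complex.normSq ((Vᴴ.mulVec v) j) : ℝ) : ℂ) := by
    intro v; rw [hdecomp]; exact quadform_eq V d v
  -- find z with T z = X, using orthogonal decomposition
  obtain ⟨z, hz⟩ : ∃ z : Fin n → ℂ, (toep n u).mulVec z = X := by
    classical
    set e : EuclideanSpace ℂ (Fin n) ≃ₗ[ℂ] (Fin n → ℂ) := WithLp.linearEquiv 2 ℂ (Fin n → ℂ)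
      with hedef
    set L : EuclideanSpace ℂ (Fin n) →ₗ[ℂ] EuclideanSpace ℂ (Fin n) :=
      e.symm.toLinearMap ∘ₗ (toep n u).mulVecLin ∘ₗ e.toLinearMap with hLdef
    have hLapp : ∀ y : EuclideanSpace ℂ (Fin n),
        (e (L y) : Fin n → ℂ) = (toep n u).mulVec (e y) := by
      intro y; rfl
    obtain ⟨Y₁, hY₁, Y₂, hY₂, hsplit⟩ :=
      (LinearMap.range L).exists_add_mem_mem_orthogonal (e.symm X)
    have horth : ∀ Yv ∈ LinearMap.range L, (inner ℂ Yv Y₂ : ℂ) = 0 :=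
      fun Yv h => (Submodule.mem_orthogonal _ _).mp hY₂ Yv h
    have hinner : ∀ (a : EuclideanSpace ℂ (Fin n)) (b : Fin n → ℂ),
        (inner ℂ a ((e.symm b) : EuclideanSpace ℂ (Fin n)) : ℂ) = star (e a) ⬝ᵥ b := by
      intro a b
      rw [PiLp.inner_apply]
      simp only [RCLike.inner_apply', dotProduct, Pi.star_apply]
      rfl
    -- Step A : T Y₂ = 0
    have hTY₂ : (toep n u).mulVec (e Y₂) = 0 := by
      have h1 : (inner ℂ (L Y₂) Y₂ : ℂ) = 0 := horth _ ⟨Y₂, rfl⟩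
      have h2 : star (e Y₂) ⬝ᵥ (toep n u).mulVec (e Y₂) = 0 := by
        have h3 : (inner ℂ (L Y₂) Y₂ : ℂ)
            = (starRingEnd ℂ) (star (e Y₂) ⬝ᵥ (toep n u).mulVec (e Y₂)) := by
          rw [PiLp.inner_apply]
          simp only [RCLike.inner_apply', dotProduct, Pi.star_apply, map_sum,
            _root_.map_mul, Complex.conj_conj]
          refine Finset.sum_congr rfl fun i _ => ?_
          have : (L Y₂) i = ((toep n u).mulVec (e Y₂)) i := congrFun (hLapp Y₂) i
          rw [Complex.star_def, this, Complex.conj_conj]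
          exact mul_comm _ _
        rw [h3, map_eq_zero] at h1
        exact h1
      rw [hqf] at h2
      have h4 : (∑ j, d j * Complex.normSq ((Vᴴ.mulVec (e Y₂)) j) : ℝ) = 0 := by
        exact_mod_cast h2
      have h5 : Vᴴ.mulVec (e Y₂) = 0 := by
        funext j
        have hterm : ∀ k ∈ Finset.univ, (0:ℝ) ≤ d k * Complex.normSq ((Vᴴ.mulVec (e Y₂)) k) :=
          fun k _ => mul_nonneg (hd k).le (Complex.normSq_nonneg _)
        have := (Finset.sum_eq_zero_iff_of_nonneg hterm).mp h4 j (Finset.mem_univ j)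
        have h6 : Complex.normSq ((Vᴴ.mulVec (e Y₂)) j) = 0 := by
          rcases mul_eq_zero.mp this with h | h
          · exact absurd h (ne_of_gt (hd j))
          · exact h
        exact Complex.normSq_eq_zero.mp h6
      rw [hdecomp, ← Matrix.mulVec_mulVec, ← Matrix.mulVec_mulVec, h5, Matrix.mulVec_zero,
        Matrix.mulVec_zero]
    -- Step B : star Y₂ ⬝ᵥ X = 0
    have hY₂X : star (e Y₂) ⬝ᵥ X = 0 := by
      set α : ℂ := star (e Y₂) ⬝ᵥ X with hα
      have hq : ∀ w : ℂ, 0 ≤ 2 * (α * w).re + s * Complex.normSq w := by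
        intro w
        have := quad_expand _ X s hpsd (e Y₂) w
        rw [hTY₂, dotProduct_zero] at this
        simpa using this
      have hkey := hq (-(((1/(s+1) : ℝ)) : ℂ) * (starRingEnd ℂ) α)
      have hre : (α * (-(((1/(s+1) : ℝ)) : ℂ) * (starRingEnd ℂ) α)).re
          = -(1/(s+1)) * Complex.normSq α := by
        have : α * (-(((1/(s+1) : ℝ)) : ℂ) * (starRingEnd ℂ) α)
            = -(((1/(s+1) : ℝ)) : ℂ) * ((Complex.normSq α : ℝ) : ℂ) := by
          rw [← Complex.mul_conj]; ring
        rw [this, neg_mul, ← Complex.ofReal_mul, ← Complex.ofReal_neg, Complex.ofReal_re, neg_mul]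
      have hns : Complex.normSq (-(((1/(s+1) : ℝ)) : ℂ) * (starRingEnd ℂ) α)
          = (1/(s+1))^2 * Complex.normSq α := by
        rw [Complex.normSq_mul, Complex.normSq_neg, Complex.normSq_conj, Complex.normSq_ofReal]
        ring
      rw [hre, hns] at hkey
      have hsp : (0:ℝ) < s + 1 := by linarith
      have hN : Complex.normSq α = 0 := by
        have h1 : (0:ℝ) < 1/(s+1) := by positivity
        have h2 : s * (1/(s+1)) ≤ 1 := by
          rw [mul_one_div]
          exact (div_le_one hsp).mpr (by linarith)
        have hqN : 0 ≤ (1/(s+1)) * Complex.normSq α :=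
          mul_nonneg h1.le (Complex.normSq_nonneg α)
        have h3 : s * ((1/(s+1))^2 * Complex.normSq α)
            = (s * (1/(s+1))) * ((1/(s+1)) * Complex.normSq α) := by ring
        have h4 : (s * (1/(s+1))) * ((1/(s+1)) * Complex.normSq α)
            ≤ 1 * ((1/(s+1)) * Complex.normSq α) := mul_le_mul_of_nonneg_right h2 hqN
        have h6 : (1/(s+1)) * Complex.normSq α = 0 := le_antisymm (by linarith) hqN
        rcases mul_eq_zero.mp h6 with h | h
        · exact absurd h (ne_of_gt h1)
        · exact h
      exact Complex.normSq_eq_zero.mp hN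
    -- Step C : Y₂ = 0 and conclusion
    have hY₂0 : Y₂ = 0 := by
      have h1 : (inner ℂ Y₂ (e.symm X) : ℂ) = star (e Y₂) ⬝ᵥ X := hinner Y₂ X
      have h2 : (inner ℂ Y₂ (Y₁ + Y₂) : ℂ) = inner ℂ Y₂ Y₁ + inner ℂ Y₂ Y₂ := inner_add_right _ _ _
      have h3 : (inner ℂ Y₂ Y₁ : ℂ) = 0 := by
        rw [← inner_conj_symm, horth Y₁ hY₁, map_zero]
      rw [← hsplit, h1, hY₂X] at h2
      rw [h3, zero_add] at h2
      exact inner_self_eq_zero.mp h2.symm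
    rw [hY₂0, add_zero] at hsplit
    obtain ⟨z, hzL⟩ := hY₁
    refine ⟨e z, ?_⟩
    have h7 : e (L z) = X := by rw [hzL, ← hsplit, LinearEquiv.apply_symm_apply]
    rw [← hLapp z]
    exact h7
  -- define c
  set g : Fin r → ℂ := Vᴴ.mulVec z with hgdef
  have hDg : (Matrix.diagonal fun j => ((d j : ℝ) : ℂ)).mulVec g
      = fun j => (d j : ℂ) * g j := funext fun j => Matrix.mulVec_diagonal _ _ _
  have hXc : X = V.mulVec (fun j => (d j : ℂ) * g j) := by
    rw [← hz, hdecomp, ← Matrix.mulVec_mulVec, ← Matrix.mulVec_mulVec, hDg]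
  refine ⟨fun j => (d j : ℂ) * g j, hXc, ?_⟩
  have habs : ∀ j, ‖(d j : ℂ) * g j‖ = d j * ‖g j‖ := by
    intro j
    rw [norm_mul, Complex.norm_real, Real.norm_eq_abs, abs_of_pos (hd j)]
  -- the quadratic value is at most s
  set ρ : ℝ := ∑ j, d j * Complex.normSq (g j) with hρdef
  have hρs : ρ ≤ s := by
    have hq := quad_expand _ X s hpsd z (-1)
    have h1 : star z ⬝ᵥ (toep n u).mulVec z = (ρ : ℂ) := hqf z
    have h2 : star z ⬝ᵥ X = (ρ : ℂ) := by rw [← hz]; exact h1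
    rw [h1, h2] at hq
    have h3 : ((ρ : ℂ) * (-1)).re = -ρ := by
      simp
    rw [h3] at hq
    simp only [Complex.ofReal_re, Complex.normSq_neg, Complex.normSq_one] at hq
    linarith
  -- trace identity
  have htr : ((toep n u).trace).re = (n : ℝ) * ∑ j, d j := by
    rw [hdecomp, Matrix.trace_mul_comm, ← Matrix.mul_assoc]
    have hentry : ∀ j, (Vᴴ * V * Matrix.diagonal (fun j => ((d j : ℝ) : ℂ))).diag j
        = (((n : ℝ) * d j : ℝ) : ℂ) := by
      intro j
      rw [Matrix.diag_apply, Matrix.mul_diagonal, Matrix.mul_apply]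
      have h1 : ∀ k : Fin n, Vᴴ j k * V k j = 1 := by
        intro k
        rw [Matrix.conjTranspose_apply, Complex.star_def, ← Complex.normSq_eq_conj_mul_self,
          hV k j, atom_normSq n (t j) k, Complex.ofReal_one]
      rw [Finset.sum_congr rfl fun k _ => h1 k, Finset.sum_const, Finset.card_univ,
        Fintype.card_fin, nsmul_eq_mul, mul_one]
      push_cast
      ring
    rw [Matrix.trace, Finset.sum_congr rfl fun j _ => hentry j, ← Complex.ofReal_sum,
      Complex.ofReal_re, ← Finset.mul_sum]
  have hnne : (n : ℝ) ≠ 0 := Nat.cast_ne_zero.mpr hn.ne'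
  have hsum : s * ∑ j, d j = atomicNorm X ^ 2 := by
    rw [← hopt, htr]
    field_simp
  -- Cauchy–Schwarz
  have hcs := Finset.sum_mul_sq_le_sq_mul_sq Finset.univ (fun j => Real.sqrt (d j))
    (fun j => Real.sqrt (d j) * ‖g j‖)
  have hcs1 : ∀ j, Real.sqrt (d j) * (Real.sqrt (d j) * ‖g j‖)
      = d j * ‖g j‖ := by
    intro j
    rw [← mul_assoc, Real.mul_self_sqrt (hd j).le]
  have hcs2 : ∀ j, Real.sqrt (d j) ^ 2 = d j := fun j => Real.sq_sqrt (hd j).le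
  have hcs3 : ∀ j, (Real.sqrt (d j) * ‖g j‖) ^ 2
      = d j * Complex.normSq (g j) := by
    intro j
    rw [mul_pow, Real.sq_sqrt (hd j).le, Complex.sq_norm]
  rw [Finset.sum_congr rfl fun j _ => hcs1 j, Finset.sum_congr rfl fun j _ => hcs2 j,
    Finset.sum_congr rfl fun j _ => hcs3 j] at hcs
  have hds : (0:ℝ) ≤ ∑ j, d j := Finset.sum_nonneg fun j _ => (hd j).le
  have hchain : (∑ j, d j * ‖g j‖) ^ 2 ≤ atomicNorm X ^ 2 := by
    calc (∑ j, d j * ‖g j‖) ^ 2 ≤ (∑ j, d j) * ρ := hcs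
      _ ≤ (∑ j, d j) * s := mul_le_mul_of_nonneg_left hρs hds
      _ = s * ∑ j, d j := mul_comm _ _
      _ = atomicNorm X ^ 2 := hsum
  have hsumabs : ∑ j, ‖(d j : ℂ) * g j‖ = ∑ j, d j * ‖g j‖ :=
    Finset.sum_congr rfl fun j _ => habs j
  have hupper : ∑ j, ‖(d j : ℂ) * g j‖ ≤ atomicNorm X := by
    rw [hsumabs]
    have h0 : (0:ℝ) ≤ ∑ j, d j * ‖g j‖ :=
      Finset.sum_nonneg fun j _ => mul_nonneg (hd j).le (norm_nonneg _)
    have := Real.sqrt_le_sqrt hchain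
    rwa [Real.sqrt_sq h0, Real.sqrt_sq hA0] at this
  exact le_antisymm hupper (lower _ hXc)
end

section
/- Let u ∈ ℂ^n, s > 0, and X ∈ ℂ^n be such that the block matrix [[Toep(u), X],[Xᴴ, s]] is positive semidefinite. Suppose Toep(u) = V D Vᴴ, where V = [a(t_1,0), ..., a(t_r,0)] for distinct t_1,...,t_r ∈ [0,1) with r ≤ n, and D is a diagonal matrix with nonnegative diagonal entries. Then (1/n)·s·Tr(Toep(u)) ≥ ‖X‖_A². -/
open Matrix Complex ComplexConjugate BigOperators
open scoped ComplexOrder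

lemma sum_normSq_eq_zero' {n : ℕ} {x : Fin n → ℂ}
    (h : ∑ f, Complex.normSq (x f) = 0) : x = 0 := by
  funext f
  have h0 : ∀ i ∈ Finset.univ, (0:ℝ) ≤ Complex.normSq (x i) := fun i _ => Complex.normSq_nonneg _
  have := (Finset.sum_eq_zero_iff_of_nonneg h0).mp h f (Finset.mem_univ f)
  simpa using this

lemma star_dot_self' {n : ℕ} (x : Fin n → ℂ) :
    star x ⬝ᵥ x = ((∑ f, Complex.normSq (x f) : ℝ) : ℂ) := by
  push_cast
  simp only [dotProduct, Pi.star_apply]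
  exact Finset.sum_congr rfl fun f _ => by
    rw [Complex.star_def, ← Complex.normSq_eq_conj_mul_self]

lemma phase_mem' (w : ℂ) :
    (if w.arg < 0 then w.arg + 2*Real.pi else w.arg) ∈ Set.Ico (0:ℝ) (2*Real.pi) := by
  have h1 := Complex.neg_pi_lt_arg w
  have h2 := Complex.arg_le_pi w
  have hπ := Real.pi_pos
  split_ifs with h <;> constructor <;> linarith

lemma abs_mul_atom' {n : ℕ} (w : ℂ) (tj : ℝ) (f : Fin n) :
    (‖w‖ : ℂ) * atom n tj (if w.arg < 0 then w.arg + 2*Real.pi else w.arg) f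
      = w * atom n tj 0 f := by
  unfold atom
  set φ : ℝ := if w.arg < 0 then w.arg + 2*Real.pi else w.arg with hφ
  have h1 : Complex.exp (-Complex.I * (((2 * Real.pi * (f:ℕ) * tj : ℝ) : ℂ) - (φ:ℝ)))
      = Complex.exp ((φ:ℂ) * Complex.I) *
        Complex.exp (-Complex.I * (((2 * Real.pi * (f:ℕ) * tj : ℝ):ℂ) - ((0:ℝ):ℂ))) := by
    rw [← Complex.exp_add]
    push_cast
    ring_nf
  have h2 : (‖w‖ : ℂ) * Complex.exp ((φ:ℂ) * Complex.I) = w := by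
    rw [hφ]
    split_ifs with h
    · push_cast
      rw [add_mul, Complex.exp_add, mul_comm 2 (Real.pi:ℂ)]
      rw [show ((Real.pi:ℂ) * 2 * Complex.I) = 2 * (Real.pi:ℂ) * Complex.I by ring]
      rw [Complex.exp_two_pi_mul_I, mul_one]
      exact Complex.norm_mul_exp_arg_mul_I w
    · exact Complex.norm_mul_exp_arg_mul_I w
  rw [h1, ← mul_assoc, h2]

/-- The other direction of Proposition 1: any feasible point of the SDP whose Toeplitz block
admits a Vandermonde decomposition has value at least `‖X‖_A²`. -/
theorem squared_atomicNorm_le_sdp_value (n r : ℕ) (hr : r ≤ n) (u X : Fin n → ℂ)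
    (s : ℝ) (hs : 0 < s)
    (hpsd : (blockMat (toep n u) X s).PosSemidef)
    (t : Fin r → ℝ) (ht : ∀ j, t j ∈ Set.Ico (0 : ℝ) 1) (htinj : Function.Injective t)
    (d : Fin r → ℝ) (hd : ∀ j, 0 ≤ d j)
    (V : Matrix (Fin n) (Fin r) ℂ) (hV : ∀ f l, V f l = atom n (t l) 0 f)
    (hdecomp : toep n u = V * Matrix.diagonal (fun j => (d j : ℂ)) * Vᴴ) :
    (1 / (n : ℝ)) * s * ((toep n u).trace).re ≥ (atomicNorm X) ^ 2 := by
  classical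
  -- atoms as powers of unimodular numbers
  set z : Fin r → ℂ := fun l => Complex.exp (((-(2 * Real.pi * t l) : ℝ) : ℂ) * Complex.I)
    with hz
  have hVpow : ∀ (f : Fin n) (l : Fin r), V f l = z l ^ (f : ℕ) := by
    intro f l
    rw [hV]
    unfold atom
    rw [hz, ← Complex.exp_nat_mul]
    congr 1
    push_cast
    ring
  have hzinj : Function.Injective z := by
    intro l m hlm
    apply htinj
    obtain ⟨k, hk⟩ := Complex.exp_eq_exp_iff_exists_int.mp hlm
    have him := congrArg Complex.im hk
    simp [Complex.add_im, Complex.mul_im, Complex.ofReal_re, Complex.ofReal_im] at him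
    have hpi := Real.pi_pos
    obtain ⟨hl0, hl1⟩ := ht l
    obtain ⟨hm0, hm1⟩ := ht m
    have hk0 : k = 0 := by
      have hlt : (-1 : ℝ) < k ∧ (k : ℝ) < 1 := by constructor <;> nlinarith
      exact_mod_cast (by omega : ∀ a : ℤ, -1 < a → a < 1 → a = 0) k
        (by exact_mod_cast hlt.1) (by exact_mod_cast hlt.2)
    rw [hk0] at him
    simp at him
    linarith
  -- full column rank of V
  have hWdet : (Matrix.of fun (f l : Fin r) => z l ^ (f:ℕ)).det ≠ 0 := by
    have hWT : (Matrix.of fun (f l : Fin r) => z l ^ (f:ℕ)) = (Matrix.vandermonde z)ᵀ := by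
      ext f l; simp [Matrix.vandermonde]
    rw [hWT, Matrix.det_transpose, Matrix.det_vandermonde]
    apply Finset.prod_ne_zero_iff.mpr
    intro i _
    apply Finset.prod_ne_zero_iff.mpr
    intro j hj
    exact sub_ne_zero.mpr fun h => (Finset.mem_Ioi.mp hj).ne' (hzinj h)
  have hfull : ∀ c : Fin r → ℂ, V *ᵥ c = 0 → c = 0 := by
    intro c hc
    by_contra hne
    refine hWdet (Matrix.exists_mulVec_eq_zero_iff.mp ⟨c, hne, ?_⟩)
    funext f
    have hcc := congrFun hc (Fin.castLE hr f)
    simpa [Matrix.mulVec, dotProduct, hVpow] using hcc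
  -- Gram matrix is invertible
  set G : Matrix (Fin r) (Fin r) ℂ := Vᴴ * V with hG
  have hGdet : IsUnit G.det := by
    rw [isUnit_iff_ne_zero]
    intro hdet0
    obtain ⟨c, hc0, hc⟩ := Matrix.exists_mulVec_eq_zero_iff.mpr hdet0
    have h1 : star (V *ᵥ c) ⬝ᵥ (V *ᵥ c) = 0 := by
      rw [Matrix.star_mulVec, ← Matrix.dotProduct_mulVec, Matrix.mulVec_mulVec, ← hG, hc,
        dotProduct_zero]
    rw [star_dot_self'] at h1
    exact hc0 (hfull c (sum_normSq_eq_zero' (by exact_mod_cast h1)))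
  have hsurj : ∀ m : Fin r → ℂ, ∃ y, Vᴴ *ᵥ y = m := by
    intro m
    refine ⟨V *ᵥ (G⁻¹ *ᵥ m), ?_⟩
    rw [Matrix.mulVec_mulVec, Matrix.mulVec_mulVec, ← hG, ← Matrix.mulVec_mulVec,
      Matrix.mulVec_mulVec, Matrix.mul_nonsing_inv _ hGdet, Matrix.one_mulVec]
  -- quadratic form of the Toeplitz matrix
  have hQF : ∀ y : Fin n → ℂ, star y ⬝ᵥ (toep n u *ᵥ y)
      = ((∑ j, d j * Complex.normSq ((Vᴴ *ᵥ y) j) : ℝ) : ℂ) := by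
    intro y
    rw [hdecomp, ← Matrix.mulVec_mulVec, ← Matrix.mulVec_mulVec, Matrix.dotProduct_mulVec]
    have hst : star y ᵥ* V = star (Vᴴ *ᵥ y) := by
      rw [Matrix.star_mulVec, Matrix.conjTranspose_conjTranspose]
    rw [hst]
    push_cast
    simp only [dotProduct, Pi.star_apply, Matrix.mulVec_diagonal]
    apply Finset.sum_congr rfl
    intro j _
    rw [Complex.star_def]
    rw [show ((starRingEnd ℂ) ((Vᴴ *ᵥ y) j)) * ((d j : ℂ) * (Vᴴ *ᵥ y) j)
      = (d j : ℂ) * ((starRingEnd ℂ) ((Vᴴ *ᵥ y) j) * (Vᴴ *ᵥ y) j) from by ring]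
    rw [← Complex.normSq_eq_conj_mul_self]
  -- Schur-complement-type inequality from PSD
  have hKEY : ∀ (y : Fin n → ℂ) (a : ℝ),
      star y ⬝ᵥ (toep n u *ᵥ y) = (a : ℂ) →
      Complex.normSq (star X ⬝ᵥ y) ≤ s * a := by
    intro y a ha
    set c : ℂ := star X ⬝ᵥ y with hc
    set zz : ℂ := -(c / (s:ℂ)) with hzz
    have h2 := hpsd.dotProduct_mulVec_nonneg (Sum.elim y (fun _ => zz))
    have hmv : blockMat (toep n u) X s *ᵥ Sum.elim y (fun _ => zz)
        = Sum.elim (fun f => (toep n u *ᵥ y) f + X f * zz) (fun _ => c + (s:ℂ) * zz) := by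
      funext i
      cases i with
      | inl f =>
        simp [blockMat, Matrix.mulVec, dotProduct, Fintype.sum_sum_type, Matrix.col]
      | inr _ =>
        simp [blockMat, Matrix.mulVec, dotProduct, Fintype.sum_sum_type, Matrix.row, hc,
          mul_comm]
    have hstar : star (Sum.elim y fun _ : Unit => zz) = Sum.elim (star y) (fun _ : Unit => star zz) := by
      funext i; cases i <;> simp
    rw [hmv, hstar] at h2
    have hE : Sum.elim (star y) (fun _ : Unit => star zz) ⬝ᵥ
        Sum.elim (fun f => (toep n u *ᵥ y) f + X f * zz) (fun _ : Unit => c + (s:ℂ) * zz)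
        = ((a - Complex.normSq c / s : ℝ) : ℂ) := by
      simp only [dotProduct, Fintype.sum_sum_type, Finset.univ_unique, Finset.sum_singleton,
        Sum.elim_inl, Sum.elim_inr, Pi.star_apply]
      have hsplit : ∑ f, star (y f) * ((toep n u *ᵥ y) f + X f * zz)
          = star y ⬝ᵥ (toep n u *ᵥ y) + (∑ f, star (y f) * X f) * zz := by
        simp only [mul_add, Finset.sum_add_distrib, dotProduct, Finset.sum_mul, Pi.star_apply]
        ring_nf
        congr 1
        exact Finset.sum_congr rfl fun f _ => by ring
      rw [hsplit, ha]
      have hyX : ∑ f, star (y f) * X f = star c := by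
        rw [hc]
        simp only [dotProduct, star_sum, star_mul', Pi.star_apply, star_star]
        exact Finset.sum_congr rfl fun f _ => mul_comm _ _
      rw [hyX, hzz]
      have hs' : (s:ℂ) ≠ 0 := by exact_mod_cast hs.ne'
      have hcc : c * star c = (Complex.normSq c : ℂ) := by
        rw [Complex.star_def, Complex.mul_conj]
      push_cast
      field_simp
      ring_nf
      rw [mul_comm (star c) c, hcc]
    rw [hE] at h2
    have h3 : (0:ℝ) ≤ a - Complex.normSq c / s := Complex.zero_le_real.mp h2
    have := mul_le_mul_of_nonneg_left (sub_nonneg.mp h3 : Complex.normSq c / s ≤ a) hs.le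
    calc Complex.normSq c = s * (Complex.normSq c / s) := by field_simp
      _ ≤ s * a := this
  -- existence of the coefficient vector w₀ with X = V w₀
  set w₀ : Fin r → ℂ := G⁻¹ *ᵥ (Vᴴ *ᵥ X) with hw₀
  have hVtV : Vᴴ *ᵥ (V *ᵥ w₀) = Vᴴ *ᵥ X := by
    rw [hw₀, Matrix.mulVec_mulVec, Matrix.mulVec_mulVec, ← Matrix.mulVec_mulVec,
      Matrix.mulVec_mulVec, ← hG, Matrix.mul_nonsing_inv _ hGdet, Matrix.one_mulVec]
  set y1 : Fin n → ℂ := X - V *ᵥ w₀ with hy1def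
  have hy0 : Vᴴ *ᵥ y1 = 0 := by
    rw [hy1def, Matrix.mulVec_sub, hVtV, sub_self]
  have hTy0 : star y1 ⬝ᵥ (toep n u *ᵥ y1) = ((0:ℝ):ℂ) := by
    rw [hQF, hy0]
    norm_num
  have hXsplit : X = y1 + V *ᵥ w₀ := by rw [hy1def]; abel
  have hXy0 : star X ⬝ᵥ y1 = ((∑ f, Complex.normSq (y1 f) : ℝ) : ℂ) := by
    calc star X ⬝ᵥ y1
        = star y1 ⬝ᵥ y1 + star (V *ᵥ w₀) ⬝ᵥ y1 := by
          rw [hXsplit, star_add, add_dotProduct]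
      _ = ((∑ f, Complex.normSq (y1 f) : ℝ) : ℂ) := by
          rw [Matrix.star_mulVec, ← Matrix.dotProduct_mulVec, hy0, dotProduct_zero, add_zero,
            star_dot_self']
  have hXVw : X = V *ᵥ w₀ := by
    have hk0 := hKEY _ 0 hTy0
    rw [hXy0, Complex.normSq_ofReal, mul_zero] at hk0
    have hnn : 0 ≤ ∑ f, Complex.normSq (y1 f) :=
      Finset.sum_nonneg fun f _ => Complex.normSq_nonneg _
    have hz0 : ∑ f, Complex.normSq (y1 f) = 0 := by nlinarith
    have h1 : y1 = 0 := sum_normSq_eq_zero' hz0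
    rw [hy1def] at h1
    exact sub_eq_zero.mp h1
  -- coefficients vanish off the support of d
  have hwzero : ∀ j, d j = 0 → w₀ j = 0 := by
    intro j hj
    obtain ⟨y, hy⟩ := hsurj (Pi.single j 1)
    have hTy : star y ⬝ᵥ (toep n u *ᵥ y) = ((0:ℝ):ℂ) := by
      rw [hQF, hy]
      norm_cast
      have hterm : ∀ l, d l * Complex.normSq ((Pi.single j (1:ℂ) : Fin r → ℂ) l) = if l = j then d l else 0 := by
        intro l
        by_cases h : l = j <;> simp [Pi.single_apply, h]
      rw [Finset.sum_congr rfl (fun l _ => hterm l), Finset.sum_ite_eq' Finset.univ j d]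
      simp [hj]
    have hk := hKEY y 0 hTy
    have hXy : star X ⬝ᵥ y = star (w₀ j) := by
      rw [hXVw, Matrix.star_mulVec, ← Matrix.dotProduct_mulVec, hy]
      simp [dotProduct, Pi.single_apply, mul_ite, Finset.sum_ite_eq']
    rw [hXy, mul_zero] at hk
    have h0 : Complex.normSq (star (w₀ j)) = 0 := le_antisymm hk (Complex.normSq_nonneg _)
    have := Complex.normSq_eq_zero.mp h0
    simpa using this
  -- the quantity q and the bound q ≤ s
  set q : ℝ := ∑ j, (if d j = 0 then 0 else Complex.normSq (w₀ j) / d j) with hqdef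
  have hq0 : 0 ≤ q := Finset.sum_nonneg fun j _ => by
    by_cases h : d j = 0
    · simp [h]
    · simp only [h, if_false]
      exact div_nonneg (Complex.normSq_nonneg _) (hd j)
  obtain ⟨y, hy⟩ := hsurj (fun j => if d j = 0 then 0 else w₀ j / (d j : ℂ))
  have hTy : star y ⬝ᵥ (toep n u *ᵥ y) = (q : ℂ) := by
    rw [hQF, hy]
    norm_cast
    rw [hqdef]
    apply Finset.sum_congr rfl
    intro j _
    by_cases h : d j = 0
    · simp [h]
    · simp only [h, if_false]
      rw [Complex.normSq_div, Complex.normSq_ofReal]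
      field_simp
  have hXyq : star X ⬝ᵥ y = (q : ℂ) := by
    rw [hXVw, Matrix.star_mulVec, ← Matrix.dotProduct_mulVec, hy, hqdef]
    rw [Complex.ofReal_sum]
    simp only [dotProduct, Pi.star_apply]
    apply Finset.sum_congr rfl
    intro j _
    by_cases h : d j = 0
    · simp [h]
    · simp only [h, if_false]
      rw [Complex.star_def,
        show (starRingEnd ℂ) (w₀ j) * (w₀ j / ((d j : ℝ):ℂ))
          = (w₀ j * (starRingEnd ℂ) (w₀ j)) / ((d j : ℝ):ℂ) from by ring,
        Complex.mul_conj]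
      norm_cast
  have hks := hKEY y q hTy
  rw [hXyq, Complex.normSq_ofReal] at hks
  have hqs : q ≤ s := by nlinarith
  -- Cauchy–Schwarz
  set A : ℝ := ∑ j, ‖w₀ j‖ with hAdef
  have hCS : A ^ 2 ≤ q * (∑ j, d j) := by
    have h := Finset.sum_mul_sq_le_sq_mul_sq Finset.univ
      (fun j => if d j = 0 then 0 else ‖w₀ j‖ / Real.sqrt (d j))
      (fun j => Real.sqrt (d j))
    have h1 : ∑ j, (if d j = 0 then 0 else ‖w₀ j‖ / Real.sqrt (d j))
        * Real.sqrt (d j) = A := by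
      rw [hAdef]
      apply Finset.sum_congr rfl
      intro j _
      by_cases hh : d j = 0
      · simp [hh, hwzero j hh]
      · have hdj : 0 < d j := lt_of_le_of_ne (hd j) (Ne.symm hh)
        rw [if_neg hh, div_mul_cancel₀]
        exact (Real.sqrt_ne_zero').mpr hdj
    have h2 : ∑ j, (if d j = 0 then 0 else ‖w₀ j‖ / Real.sqrt (d j))^2 = q := by
      rw [hqdef]
      apply Finset.sum_congr rfl
      intro j _
      by_cases hh : d j = 0
      · simp [hh]
      · rw [if_neg hh, if_neg hh, div_pow, Real.sq_sqrt (hd j), Complex.sq_norm]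
    have h3 : ∑ j, Real.sqrt (d j)^2 = ∑ j, d j :=
      Finset.sum_congr rfl fun j _ => Real.sq_sqrt (hd j)
    calc A^2 = (∑ j, (if d j = 0 then 0 else ‖w₀ j‖ / Real.sqrt (d j))
          * Real.sqrt (d j))^2 := by rw [h1]
      _ ≤ (∑ j, (if d j = 0 then 0 else ‖w₀ j‖ / Real.sqrt (d j))^2)
          * (∑ j, Real.sqrt (d j)^2) := h
      _ = q * ∑ j, d j := by rw [h2, h3]
  -- trace computation
  have hnorm1 : ∀ (f : Fin n) (l : Fin r), V f l * star (V f l) = 1 := by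
    intro f l
    rw [Complex.star_def, Complex.mul_conj]
    norm_cast
    rw [hVpow, map_pow, hz]
    simp [Complex.normSq_eq_norm_sq, Complex.norm_exp]
  have htr : ((toep n u).trace).re = n * ∑ j, d j := by
    have htrc : (toep n u).trace = (((n : ℝ) * ∑ j, d j : ℝ) : ℂ) := by
      rw [hdecomp]
      have hentry : ∀ f : Fin n,
          (V * Matrix.diagonal (fun j => ((d j : ℝ):ℂ)) * Vᴴ) f f = ((∑ j, d j : ℝ) : ℂ) := by
        intro f
        rw [Matrix.mul_apply, Complex.ofReal_sum]
        apply Finset.sum_congr rfl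
        intro j _
        rw [Matrix.mul_diagonal, Matrix.conjTranspose_apply,
          show V f j * ((d j : ℝ):ℂ) * star (V f j)
            = ((d j : ℝ):ℂ) * (V f j * star (V f j)) from by ring,
          hnorm1 f j, mul_one]
      simp only [Matrix.trace, Matrix.diag_apply]
      rw [Finset.sum_congr rfl (fun f _ => hentry f)]
      rw [Finset.sum_const, Finset.card_univ, Fintype.card_fin]
      rw [nsmul_eq_mul]
      push_cast
      ring
    rw [htrc, Complex.ofReal_re]
  -- atomic norm bounds
  have haN0 : 0 ≤ atomicNorm X := by
    unfold atomicNorm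
    apply Real.sInf_nonneg
    intro v hv
    obtain ⟨k, c, t', φ', _, _, _, hveq⟩ := hv
    rw [hveq]
    exact Finset.sum_nonneg fun j _ => norm_nonneg _
  have haN : atomicNorm X ≤ A := by
    unfold atomicNorm
    apply csInf_le
    · refine ⟨0, fun v hv => ?_⟩
      obtain ⟨k, c, t', φ', _, _, _, hveq⟩ := hv
      rw [hveq]
      exact Finset.sum_nonneg fun j _ => norm_nonneg _
    · refine ⟨r, w₀, t,
        fun j => if (w₀ j).arg < 0 then (w₀ j).arg + 2*Real.pi else (w₀ j).arg,
        ht, fun j => phase_mem' _, ?_, hAdef⟩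
      rw [hXVw]
      funext f
      rw [Finset.sum_apply]
      simp only [Matrix.mulVec, dotProduct, Pi.smul_apply, smul_eq_mul]
      apply Finset.sum_congr rfl
      intro j _
      rw [abs_mul_atom', hV, mul_comm]
  -- putting it all together
  have hfin : (atomicNorm X)^2 ≤ s * ∑ j, d j := by
    calc (atomicNorm X)^2 ≤ A^2 := pow_le_pow_left₀ haN0 haN 2
      _ ≤ q * ∑ j, d j := hCS
      _ ≤ s * ∑ j, d j := mul_le_mul_of_nonneg_right hqs (Finset.sum_nonneg fun j _ => hd j)
  rw [ge_iff_le, htr]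
  rcases Nat.eq_zero_or_pos n with hn | hn
  · subst hn
    have hr0 : r = 0 := Nat.le_antisymm hr (Nat.zero_le r)
    subst hr0
    simp only [Finset.univ_eq_empty, Finset.sum_empty, mul_zero] at hfin
    simp only [Nat.cast_zero, div_zero, zero_mul, mul_zero]
    linarith
  · have hn' : (0:ℝ) < n := by exact_mod_cast hn
    calc (atomicNorm X)^2 ≤ s * ∑ j, d j := hfin
      _ = 1/(n:ℝ) * s * ((n:ℝ) * ∑ j, d j) := by field_simp
      _ ≤ 1/(n:ℝ) * s * ((n:ℝ) * ∑ j, d j) := le_refl _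
end

section
/- Let X, Y ∈ ℂ^n with X_j ≠ 0 for every j ∈ {0,...,n−1}. If |Y_j| = |X_j| for all j ∈ {0,...,n−1}, and |Y_j + Y_{j+1}| = |X_j + X_{j+1}| and |Y_j − i Y_{j+1}| = |X_j − i X_{j+1}| for all j ∈ {0,...,n−2}, then there exists θ ∈ ℝ such that Y_j = e^{iθ} X_j for all j, i.e., Y equals X up to a global phase. -/
open Complex

lemma key_cross (a b a' b' : ℂ)
    (h1 : ‖a‖ = ‖a'‖) (h2 : ‖b‖ = ‖b'‖)
    (h3 : ‖a + b‖ = ‖a' + b'‖)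
    (h4 : ‖a - Complex.I * b‖ = ‖a' - Complex.I * b'‖) :
    a * (starRingEnd ℂ) b = a' * (starRingEnd ℂ) b' := by
  have e1 : Complex.normSq a = Complex.normSq a' := by
    rw [← Complex.sq_norm, ← Complex.sq_norm, h1]
  have e2 : Complex.normSq b = Complex.normSq b' := by
    rw [← Complex.sq_norm, ← Complex.sq_norm, h2]
  have e3 : Complex.normSq (a + b) = Complex.normSq (a' + b') := by
    rw [← Complex.sq_norm, ← Complex.sq_norm, h3]
  have e4 : Complex.normSq (a - Complex.I * b) = Complex.normSq (a' - Complex.I * b') := by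
    rw [← Complex.sq_norm, ← Complex.sq_norm, h4]
  simp only [Complex.normSq_apply, Complex.add_re, Complex.add_im, Complex.sub_re,
    Complex.sub_im, Complex.mul_re, Complex.mul_im, Complex.I_re, Complex.I_im] at e1 e2 e3 e4
  ring_nf at e1 e2 e3 e4
  apply Complex.ext <;>
    simp only [Complex.mul_re, Complex.mul_im, Complex.conj_re, Complex.conj_im] <;>
    ring_nf <;> linarith

/-- A vector with nonvanishing entries is determined up to global phase by the magnitudes
`|X_j|`, `|X_j + X_{j+1}|`, and `|X_j − iX_{j+1}|`. -/
theorem recovery_up_to_global_phase (n : ℕ) (X Y : Fin n → ℂ)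
    (hXne : ∀ j, X j ≠ 0)
    (hmag : ∀ j, ‖Y j‖ = ‖X j‖)
    (hmag2 : ∀ (j : ℕ) (hj : j + 1 < n),
      ‖Y ⟨j, Nat.lt_of_succ_lt hj⟩ + Y ⟨j + 1, hj⟩‖ =
        ‖X ⟨j, Nat.lt_of_succ_lt hj⟩ + X ⟨j + 1, hj⟩‖)
    (hmag3 : ∀ (j : ℕ) (hj : j + 1 < n),
      ‖Y ⟨j, Nat.lt_of_succ_lt hj⟩ - Complex.I * Y ⟨j + 1, hj⟩‖ =
        ‖X ⟨j, Nat.lt_of_succ_lt hj⟩ - Complex.I * X ⟨j + 1, hj⟩‖) :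
    ∃ θ : ℝ, ∀ j, Y j = Complex.exp (θ * Complex.I) * X j := by
  rcases Nat.eq_zero_or_pos n with hn | hn
  · exact ⟨0, fun j => absurd j.isLt (by omega)⟩
  set c : ℂ := Y ⟨0, hn⟩ / X ⟨0, hn⟩ with hc
  have hX0 := hXne ⟨0, hn⟩
  have habsc : ‖c‖ = 1 := by
    rw [hc, norm_div, hmag, div_self]
    simpa using (norm_ne_zero_iff.mpr hX0)
  have hcconj : c * (starRingEnd ℂ) c = 1 := by
    rw [Complex.mul_conj, ← Complex.sq_norm, habsc]; norm_num
  have main : ∀ (j : ℕ) (hj : j < n), Y ⟨j, hj⟩ = c * X ⟨j, hj⟩ := by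
    intro j
    induction j with
    | zero => intro hj; rw [hc]; field_simp
    | succ k ih =>
      intro hj
      have hk : k < n := Nat.lt_of_succ_lt hj
      have hkey := key_cross (Y ⟨k, hk⟩) (Y ⟨k+1, hj⟩) (X ⟨k, hk⟩) (X ⟨k+1, hj⟩)
        (hmag _) (hmag _) (hmag2 k hj) (hmag3 k hj)
      rw [ih hk] at hkey
      have hXk := hXne ⟨k, hk⟩
      have h5 : X ⟨k, hk⟩ * (starRingEnd ℂ) (Y ⟨k+1, hj⟩) =
          X ⟨k, hk⟩ * ((starRingEnd ℂ) c * (starRingEnd ℂ) (X ⟨k+1, hj⟩)) := by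
        linear_combination (starRingEnd ℂ) c * hkey
          - X ⟨k, hk⟩ * (starRingEnd ℂ) (Y ⟨k+1, hj⟩) * hcconj
      have h6 := mul_left_cancel₀ hXk h5
      have h7 : (starRingEnd ℂ) (Y ⟨k+1, hj⟩) = (starRingEnd ℂ) (c * X ⟨k+1, hj⟩) := by
        rw [map_mul]; exact h6
      exact (starRingEnd ℂ).injective h7
  refine ⟨Complex.arg c, fun j => ?_⟩
  have : Complex.exp (↑(Complex.arg c) * Complex.I) = c := by
    have := Complex.norm_mul_exp_arg_mul_I c
    rwa [habsc, Complex.ofReal_one, one_mul] at this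
  rw [this]
  exact main j.val j.isLt
end

section
/- Let X ∈ ℂ^n with X_j ≠ 0 for every j ∈ {0,...,n−1}, and let Q ∈ ℂ^{n×n} be positive semidefinite. If Q_{j,j} = |X_j|² for all j ∈ {0,...,n−1}, and Q_{j,j+1} = X_j·conj(X_{j+1}) and Q_{j+1,j} = X_{j+1}·conj(X_j) for all j ∈ {0,...,n−2} (i.e., Q agrees with X Xᴴ on its diagonal, superdiagonal, and subdiagonal), then Q = X Xᴴ. -/
open Matrix Complex ComplexConjugate
open scoped ComplexOrder

/-- Lemma 1: a positive semidefinite matrix agreeing with `XXᴴ` on its diagonal,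
superdiagonal and subdiagonal, for `X` with nonvanishing entries, equals `XXᴴ`. -/
theorem psd_tridiag_determines_rank_one (n : ℕ) (X : Fin n → ℂ) (hX : ∀ j, X j ≠ 0)
    (Q : Matrix (Fin n) (Fin n) ℂ) (hQ : Q.PosSemidef)
    (hdiag : ∀ j, Q j j = ((‖X j‖ : ℂ)) ^ 2)
    (hsup : ∀ (j : ℕ) (hj : j + 1 < n),
      Q ⟨j, Nat.lt_of_succ_lt hj⟩ ⟨j + 1, hj⟩ =
        X ⟨j, Nat.lt_of_succ_lt hj⟩ * conj (X ⟨j + 1, hj⟩))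
    (hsub : ∀ (j : ℕ) (hj : j + 1 < n),
      Q ⟨j + 1, hj⟩ ⟨j, Nat.lt_of_succ_lt hj⟩ =
        X ⟨j + 1, hj⟩ * conj (X ⟨j, Nat.lt_of_succ_lt hj⟩)) :
    Q = Matrix.vecMulVec X (star X) := by
  have hdiag' : ∀ j, Q j j = X j * conj (X j) := by
    intro j
    rw [hdiag, Complex.mul_conj]
    norm_cast
    exact Complex.sq_norm _
  have key : ∀ (i : Fin n) (m : ℕ) (hm : m + 1 < n),
      Q i ⟨m, Nat.lt_of_succ_lt hm⟩ * conj (X ⟨m + 1, hm⟩)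
        = Q i ⟨m + 1, hm⟩ * conj (X ⟨m, Nat.lt_of_succ_lt hm⟩) := by
    intro i m hm
    set a : Fin n := ⟨m, Nat.lt_of_succ_lt hm⟩ with ha
    set b : Fin n := ⟨m + 1, hm⟩ with hb
    have hab : a ≠ b := by simp [ha, hb, Fin.ext_iff]
    set v : Fin n → ℂ := fun x =>
      conj (X b) * (if a = x then 1 else 0) - conj (X a) * (if b = x then 1 else 0) with hv
    have hsum : ∀ (c d : ℂ) (f : Fin n → ℂ),
        (∑ x, f x * (c * (if a = x then 1 else 0) - d * (if b = x then 1 else 0)))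
          = f a * c - f b * d := by
      intro c d f
      simp only [mul_sub, mul_ite, mul_one, mul_zero, Finset.sum_sub_distrib,
        ← Finset.mul_sum]
      rw [Finset.sum_ite_eq, Finset.sum_ite_eq]
      simp [mul_comm]
    have hmv : Q *ᵥ v = fun k => Q k a * conj (X b) - Q k b * conj (X a) := by
      funext k
      exact hsum _ _ (Q k)
    have hsv : star v = fun x =>
        X b * (if a = x then 1 else 0) - X a * (if b = x then 1 else 0) := by
      funext x
      simp only [hv, Pi.star_apply, star_sub, star_mul', RCLike.star_def,
        Complex.conj_conj, apply_ite (starRingEnd ℂ), _root_.map_one, _root_.map_zero]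
    have hzero : star v ⬝ᵥ Q *ᵥ v = 0 := by
      rw [hmv, hsv]
      have : (fun x => X b * (if a = x then 1 else 0) - X a * (if b = x then 1 else 0)) ⬝ᵥ
          (fun k => Q k a * conj (X b) - Q k b * conj (X a))
          = ∑ x, (Q x a * conj (X b) - Q x b * conj (X a))
              * (X b * (if a = x then 1 else 0) - X a * (if b = x then 1 else 0)) := by
        simp only [dotProduct]
        exact Finset.sum_congr rfl fun x _ => mul_comm _ _
      rw [this, hsum]
      have e1 : Q a a = X a * conj (X a) := hdiag' a
      have e2 : Q b b = X b * conj (X b) := hdiag' b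
      have e3 : Q a b = X a * conj (X b) := hsup m hm
      have e4 : Q b a = X b * conj (X a) := hsub m hm
      rw [e1, e2, e3, e4]
      ring
    have hmv0 : Q *ᵥ v = 0 := (hQ.dotProduct_mulVec_zero_iff v).mp hzero
    have hrow : Q i a * conj (X b) - Q i b * conj (X a) = 0 := by
      have := congrFun hmv0 i
      rw [hmv] at hmv0
      have := congrFun hmv0 i
      simpa using this
    linear_combination hrow
  have upper : ∀ (d : ℕ) (i : Fin n) (hd : (i : ℕ) + d < n),
      Q i ⟨(i : ℕ) + d, hd⟩ = X i * conj (X ⟨(i : ℕ) + d, hd⟩) := by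
    intro d
    induction d with
    | zero =>
      intro i hd
      have h0 : (⟨(i:ℕ) + 0, hd⟩ : Fin n) = i := by ext; simp
      rw [h0]; exact hdiag' i
    | succ d ih =>
      intro i hd
      have hm : (i : ℕ) + d + 1 < n := by omega
      have h1 := key i ((i:ℕ) + d) hm
      have h2 := ih i (Nat.lt_of_succ_lt hm)
      have hc : conj (X ⟨(i:ℕ) + d, Nat.lt_of_succ_lt hm⟩) ≠ 0 := by
        simpa using hX _
      have heq : (⟨(i:ℕ) + (d+1), hd⟩ : Fin n) = ⟨(i:ℕ) + d + 1, hm⟩ := rfl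
      rw [heq]
      rw [h2] at h1
      refine mul_right_cancel₀ hc ?_
      linear_combination -h1
  ext i k
  rw [Matrix.vecMulVec_apply]
  rcases le_total (i : ℕ) (k : ℕ) with h | h
  · have hk : (k : Fin n) = ⟨(i:ℕ) + ((k:ℕ) - (i:ℕ)), by omega⟩ := by ext; simp; omega
    rw [hk]
    exact upper _ i _
  · have hk : (i : Fin n) = ⟨(k:ℕ) + ((i:ℕ) - (k:ℕ)), by omega⟩ := by ext; simp; omega
    have hu : Q k i = X k * conj (X i) := by rw [hk]; exact upper _ k _
    have hsym : conj (Q i k) = Q k i := by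
      have := congrFun (congrFun hQ.isHermitian k) i
      simpa [Matrix.conjTranspose_apply] using this
    have : Q i k = conj (Q k i) := by rw [← hsym]; simp
    rw [this, hu]
    simp [mul_comm]
end

section
/- Let x_0, x_1, x_2 ∈ ℂ with x_1 ≠ 0, and let Q ∈ ℂ^{3×3} be positive semidefinite with Q_{0,0} = |x_0|², Q_{1,1} = |x_1|², Q_{2,2} = |x_2|², Q_{0,1} = x_0·conj(x_1), Q_{1,0} = x_1·conj(x_0), Q_{1,2} = x_1·conj(x_2), and Q_{2,1} = x_2·conj(x_1). Then Q_{0,2} = x_0·conj(x_2) (and hence Q_{2,0} = x_2·conj(x_0)); in particular Q = x xᴴ where x = (x_0, x_1, x_2). -/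
open Matrix Complex ComplexConjugate
open scoped ComplexOrder

/-- Base case of Lemma 1: for a `3×3` positive semidefinite matrix agreeing with `xxᴴ` on its
diagonal, superdiagonal, and subdiagonal, with `x_1 ≠ 0`, the remaining corner entries are
forced and `Q = xxᴴ`. -/
theorem psd_three_by_three_corner (x : Fin 3 → ℂ) (hx1 : x 1 ≠ 0)
    (Q : Matrix (Fin 3) (Fin 3) ℂ) (hQ : Q.PosSemidef)
    (h00 : Q 0 0 = ((‖x 0‖ : ℂ)) ^ 2)
    (h11 : Q 1 1 = ((‖x 1‖ : ℂ)) ^ 2)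
    (h22 : Q 2 2 = ((‖x 2‖ : ℂ)) ^ 2)
    (h01 : Q 0 1 = x 0 * conj (x 1)) (h10 : Q 1 0 = x 1 * conj (x 0))
    (h12 : Q 1 2 = x 1 * conj (x 2)) (h21 : Q 2 1 = x 2 * conj (x 1)) :
    Q 0 2 = x 0 * conj (x 2) ∧ Q 2 0 = x 2 * conj (x 0) ∧
      Q = Matrix.vecMulVec x (star x) := by
  have habs : ∀ w : ℂ, ((‖w‖ : ℂ)) ^ 2 = w * conj w := by
    intro w
    rw [show ((‖w‖ : ℂ)) ^ 2 = ((‖w‖ ^ 2 : ℝ) : ℂ) by push_cast; ring,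
      Complex.sq_norm, Complex.mul_conj]
  set z : Fin 3 → ℂ := ![conj (x 1), -conj (x 0), 0] with hzdef
  have hz : star z ⬝ᵥ Q *ᵥ z = 0 := by
    simp only [dotProduct, mulVec, Fin.sum_univ_three, hzdef, Pi.star_apply,
      Matrix.cons_val_zero, Matrix.cons_val_one, Matrix.head_cons,
      Matrix.cons_val_two, Matrix.tail_cons, star_def, map_neg, RingHom.map_mul,
      Complex.conj_conj, map_zero, h00, h01, h10, h11, habs]
    ring
  have hker : Q *ᵥ z = 0 := (hQ.dotProduct_mulVec_zero_iff z).mp hz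
  have h2 := congrFun hker 2
  simp only [mulVec, dotProduct, Fin.sum_univ_three, hzdef,
    Matrix.cons_val_zero, Matrix.cons_val_one, Matrix.head_cons,
    Matrix.cons_val_two, Matrix.tail_cons, h21, Pi.zero_apply, mul_zero, add_zero] at h2
  have hc1 : conj (x 1) ≠ 0 := by simpa using hx1
  have h20 : Q 2 0 = x 2 * conj (x 0) := by
    have h : (Q 2 0 - x 2 * conj (x 0)) * conj (x 1) = 0 := by linear_combination h2
    rcases mul_eq_zero.mp h with h | h
    · exact sub_eq_zero.mp h
    · exact absurd h hc1
  have h02 : Q 0 2 = x 0 * conj (x 2) := by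
    rw [← hQ.isHermitian.apply 0 2, h20]
    simp [star_def, mul_comm]
  refine ⟨h02, h20, ?_⟩
  ext i j
  fin_cases i <;> fin_cases j <;>
    simp [vecMulVec_apply, h00, h01, h02, h10, h11, h12, h20, h21, h22, habs, star_def]
end

section
/- Let V ∈ ℂ^{n×r} have full column rank r (equivalently, Vᴴ has full row rank), let D ∈ ℝ^{r×r} be diagonal with nonnegative diagonal entries, let w ∈ ℂ^r, and let s > 0. If the matrix V D Vᴴ − (1/s)·V w wᴴ Vᴴ is positive semidefinite, then s·Tr(D) ≥ (Σ_{j=1}^r |w_j|)². -/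
open Matrix Complex BigOperators
open scoped ComplexOrder

/-- If `V` has full column rank, `D ⪰ 0` is diagonal, `s > 0`, and
`V D Vᴴ − (1/s)·V wwᴴ Vᴴ ⪰ 0`, then `s·Tr(D) ≥ (Σ_j |w_j|)²`. -/
theorem trace_lower_bound_of_psd (n r : ℕ) (V : Matrix (Fin n) (Fin r) ℂ)
    (hV : Function.Injective V.mulVec)
    (d : Fin r → ℝ) (hd : ∀ j, 0 ≤ d j) (w : Fin r → ℂ) (s : ℝ) (hs : 0 < s)
    (hpsd : (V * Matrix.diagonal (fun j => (d j : ℂ)) * Vᴴ -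
        ((1 / s : ℝ) : ℂ) • (V * Matrix.vecMulVec w (star w) * Vᴴ)).PosSemidef) :
    s * ∑ j, d j ≥ (∑ j, ‖w j‖) ^ 2 := by
  classical
  -- the sign vector of w
  set c : Fin r → ℂ := fun j => if w j = 0 then 1 else w j / ‖w j‖ with hc
  have hc_unit : ∀ j, (starRingEnd ℂ) (c j) * c j = 1 := by
    intro j
    simp only [hc]
    split_ifs with h
    · simp
    · rw [← Complex.normSq_eq_conj_mul_self]
      have habs : ‖w j‖ ≠ 0 := by simpa using h
      rw [Complex.normSq_div]
      simp only [Complex.normSq_ofReal, Complex.normSq_eq_norm_sq]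
      rw [Complex.norm_real, norm_norm, div_self (pow_ne_zero 2 habs), Complex.ofReal_one]
  have hc_w : ∀ j, (starRingEnd ℂ) (c j) * w j = (‖w j‖ : ℂ) := by
    intro j
    simp only [hc]
    split_ifs with h
    · simp [h]
    · have habs : (‖w j‖ : ℂ) ≠ 0 := by
        simpa using h
      rw [map_div₀]
      simp only [Complex.conj_ofReal]
      rw [div_mul_eq_mul_div, mul_comm, Complex.mul_conj, Complex.normSq_eq_norm_sq]
      field_simp
      norm_num
  -- Vᴴ V is invertible
  have hUnit : IsUnit (Vᴴ * V) := by
    rw [← Matrix.mulVec_injective_iff_isUnit]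
    intro x y hxy
    have h1 : (Vᴴ * V) *ᵥ (x - y) = 0 := by
      rw [Matrix.mulVec_sub, hxy, sub_self]
    rw [Matrix.conjTranspose_mul_self_mulVec_eq_zero] at h1
    have h2 : x - y = 0 := hV (by simpa using h1)
    exact sub_eq_zero.mp h2
  -- there exists q with Vᴴ q = c
  obtain ⟨p, hp⟩ := Matrix.mulVec_surjective_iff_isUnit.mpr hUnit c
  have hq : Vᴴ *ᵥ (V *ᵥ p) = c := by
    rw [Matrix.mulVec_mulVec]; exact hp
  have e2 : star c = star (V *ᵥ p) ᵥ* V := by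
    conv_lhs => rw [← hq]
    rw [Matrix.star_mulVec, Matrix.conjTranspose_conjTranspose]
  -- the quadratic form identity
  have key : ∀ B : Matrix (Fin r) (Fin r) ℂ,
      star (V *ᵥ p) ⬝ᵥ ((V * B * Vᴴ) *ᵥ (V *ᵥ p)) = star c ⬝ᵥ (B *ᵥ c) := by
    intro B
    have e1 : (V * B * Vᴴ) *ᵥ (V *ᵥ p) = V *ᵥ (B *ᵥ c) := by
      rw [← hp]
      simp only [Matrix.mulVec_mulVec, Matrix.mul_assoc]
    rw [e1, Matrix.dotProduct_mulVec, ← e2]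
  have h0 := hpsd.dotProduct_mulVec_nonneg (V *ᵥ p)
  rw [Matrix.sub_mulVec, dotProduct_sub, Matrix.smul_mulVec,
    dotProduct_smul] at h0
  rw [key, key] at h0
  -- compute the diagonal quadratic form
  have hdiag : star c ⬝ᵥ ((Matrix.diagonal (fun j => (d j : ℂ))) *ᵥ c)
      = ((∑ j, d j : ℝ) : ℂ) := by
    rw [dotProduct]
    push_cast
    refine Finset.sum_congr rfl fun j _ => ?_
    rw [Matrix.mulVec_diagonal]
    simp only [Pi.star_apply, RCLike.star_def]
    rw [show (starRingEnd ℂ) (c j) * ((d j : ℂ) * c j)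
        = (d j : ℂ) * ((starRingEnd ℂ) (c j) * c j) by ring, hc_unit]
    ring
  -- compute the rank-one quadratic form
  have hrank : star c ⬝ᵥ ((Matrix.vecMulVec w (star w)) *ᵥ c)
      = ((∑ j, ‖w j‖ : ℝ) : ℂ) ^ 2 := by
    have h1 : star c ⬝ᵥ w = ((∑ j, ‖w j‖ : ℝ) : ℂ) := by
      rw [dotProduct]
      push_cast
      exact Finset.sum_congr rfl fun j _ => hc_w j
    have h2 : star w ⬝ᵥ c = ((∑ j, ‖w j‖ : ℝ) : ℂ) := by
      rw [dotProduct]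
      push_cast
      refine Finset.sum_congr rfl fun j _ => ?_
      have h := congrArg (starRingEnd ℂ) (hc_w j)
      simp only [_root_.map_mul, Complex.conj_conj, Complex.conj_ofReal] at h
      simpa [mul_comm] using h
    calc star c ⬝ᵥ ((Matrix.vecMulVec w (star w)) *ᵥ c)
        = (star c ⬝ᵥ w) * (star w ⬝ᵥ c) := by
          simp only [dotProduct, Matrix.mulVec, Matrix.vecMulVec_apply,
            dotProduct, Finset.sum_mul, Finset.mul_sum]
          rw [Finset.sum_comm]
          refine Finset.sum_congr rfl fun j _ => Finset.sum_congr rfl fun k _ => ?_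
          ring
      _ = _ := by rw [h1, h2]; ring
  rw [hdiag, hrank] at h0
  -- convert to a real inequality
  have h0' : (0 : ℝ) ≤ (∑ j, d j) - (1 / s) * (∑ j, ‖w j‖) ^ 2 := by
    rw [smul_eq_mul, ← Complex.ofReal_pow, ← Complex.ofReal_mul, ← Complex.ofReal_sub] at h0
    exact_mod_cast Complex.zero_le_real.mp h0
  have h1 : 0 ≤ s * ((∑ j, d j) - 1 / s * (∑ j, ‖w j‖) ^ 2) :=
    mul_nonneg hs.le h0'
  rw [mul_sub, show s * (1 / s * (∑ j, ‖w j‖) ^ 2)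
      = (∑ j, ‖w j‖) ^ 2 by field_simp] at h1
  linarith
end
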